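/- Let k ≥ 1 be a natural number, κ ≥ 1, λ₂ > 0, and let σ, β : Fin k → ℝ be positive with σ nonincreasing, σ(0) = 1, σ(k−1) = 1/κ, β nondecreasing, j ↦ σ_j² β_j nonincreasing, and ∑_{j<k} β_j² = 1. Then ∑_{j<k} ( ((σ_j β_j)² + λ₂) / (σ_j² β_j) )² ≤ k² (1 + λ₂ κ²)². -/

import Mathlib

/-- Estimate of Appendix B of the paper for the post-selection success probability
of step 5 of the DYXL algorithm:
`∑_j (((σ_j β_j)² + λ₂)/(σ_j² β_j))² ≤ k² (1 + λ₂ κ²)²`. -/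
theorem dyxl_postselection_bound
    (k : ℕ) (hk : 1 ≤ k) (κ lam2 : ℝ)
    (hκ : 1 ≤ κ) (hlam2 : 0 < lam2)
    (σ β : Fin k → ℝ)
    (hσpos : ∀ j, 0 < σ j) (hβpos : ∀ j, 0 < β j)
    (hσanti : Antitone σ)
    (hσ0 : σ ⟨0, by omega⟩ = 1) (hσlast : σ ⟨k - 1, by omega⟩ = 1 / κ)
    (hβmono : Monotone β)
    (hanti : Antitone (fun j => σ j ^ 2 * β j))
    (hsum : ∑ j, β j ^ 2 = 1) :
    ∑ j : Fin k, (((σ j * β j) ^ 2 + lam2) / (σ j ^ 2 * β j)) ^ 2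
      ≤ (k : ℝ) ^ 2 * (1 + lam2 * κ ^ 2) ^ 2 := by
  have hκ0 : (0:ℝ) < κ := by linarith
  set L : Fin k := ⟨k - 1, by omega⟩ with hL
  have hjL : ∀ j : Fin k, j ≤ L := by
    intro j
    have := j.isLt
    simp only [Fin.le_def, hL]
    omega
  have hβL : 0 < β L := hβpos L
  have hkR : (1:ℝ) ≤ (k:ℝ) := by exact_mod_cast hk
  -- 1 ≤ k * β L ^ 2
  have hklow : (1:ℝ) ≤ (k:ℝ) * β L ^ 2 := by
    rw [← hsum]
    calc ∑ j, β j ^ 2 ≤ ∑ _j : Fin k, β L ^ 2 := by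
          refine Finset.sum_le_sum fun j _ => ?_
          have h1 := hβmono (hjL j)
          have h2 := (hβpos j).le
          nlinarith
      _ = (k:ℝ) * β L ^ 2 := by
          rw [Finset.sum_const, Finset.card_univ, Fintype.card_fin]
          simp [nsmul_eq_mul]
  set s : ℝ := Real.sqrt k with hs
  have hs2 : s ^ 2 = (k:ℝ) := Real.sq_sqrt (by positivity)
  have hs1 : 1 ≤ s := by
    rw [hs, show (1:ℝ) = Real.sqrt 1 from (Real.sqrt_one).symm]
    exact Real.sqrt_le_sqrt hkR
  have hsβ : 1 ≤ s * β L := by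
    have hsq : s ^ 2 * β L ^ 2 = (k:ℝ) * β L ^ 2 := by rw [hs2]
    have hs0 : 0 < s := by linarith
    nlinarith [sq_nonneg (s * β L - 1), mul_pos hs0 hβL]
  have key : ∀ j : Fin k,
      (((σ j * β j) ^ 2 + lam2) / (σ j ^ 2 * β j)) ^ 2 ≤ (s * (1 + lam2 * κ ^ 2)) ^ 2 := by
    intro j
    have hden : 0 < σ j ^ 2 * β j := mul_pos (pow_pos (hσpos j) 2) (hβpos j)
    have hσβ : β L / κ ^ 2 ≤ σ j ^ 2 * β j := by
      have := hanti (hjL j)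
      simp only at this
      rw [hσlast] at this
      calc β L / κ ^ 2 = (1/κ) ^ 2 * β L := by field_simp
        _ ≤ σ j ^ 2 * β j := this
    have hβj1 : β j ≤ 1 := by
      have hsingle : β j ^ 2 ≤ ∑ i, β i ^ 2 :=
        Finset.single_le_sum (fun i _ => sq_nonneg (β i)) (Finset.mem_univ j)
      rw [hsum] at hsingle
      nlinarith [hβpos j]
    have hrw : ((σ j * β j) ^ 2 + lam2) / (σ j ^ 2 * β j)
        = β j + lam2 / (σ j ^ 2 * β j) := by
      rw [add_div, mul_pow, mul_div_mul_left _ _ (pow_pos (hσpos j) 2).ne', sq, mul_div_cancel_right₀ _ (hβpos j).ne']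
    have hdiv : lam2 / (σ j ^ 2 * β j) ≤ lam2 * κ ^ 2 * s := by
      rw [div_le_iff₀ hden]
      have h1 : lam2 * κ ^ 2 * s * (β L / κ ^ 2) ≤ lam2 * κ ^ 2 * s * (σ j ^ 2 * β j) :=
        mul_le_mul_of_nonneg_left hσβ (mul_nonneg (mul_nonneg hlam2.le (sq_nonneg κ)) (by linarith))
      have h2 : lam2 * κ ^ 2 * s * (β L / κ ^ 2) = lam2 * (s * β L) := by
        field_simp
      nlinarith [mul_le_mul_of_nonneg_left hsβ hlam2.le]
    have hX0 : 0 ≤ ((σ j * β j) ^ 2 + lam2) / (σ j ^ 2 * β j) :=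
      div_nonneg (by nlinarith [sq_nonneg (σ j * β j)]) hden.le
    have hXle : ((σ j * β j) ^ 2 + lam2) / (σ j ^ 2 * β j) ≤ s * (1 + lam2 * κ ^ 2) := by
      rw [hrw]
      nlinarith
    exact pow_le_pow_left₀ hX0 hXle 2
  calc ∑ j : Fin k, (((σ j * β j) ^ 2 + lam2) / (σ j ^ 2 * β j)) ^ 2
      ≤ ∑ _j : Fin k, (s * (1 + lam2 * κ ^ 2)) ^ 2 :=
        Finset.sum_le_sum fun j _ => key j
    _ = (k:ℝ) * (s * (1 + lam2 * κ ^ 2)) ^ 2 := by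
        rw [Finset.sum_const, Finset.card_univ, Fintype.card_fin]
        simp [nsmul_eq_mul]
    _ = (k:ℝ) ^ 2 * (1 + lam2 * κ ^ 2) ^ 2 := by
        rw [mul_pow, hs2]; ring
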